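/- Let U = (u⁰,u) and S = (s⁰,s) be four-vectors with η(U,U) = −1, u⁰ > 0, η(U,S) = 0, η(S,S) = σ². Then the map S ↦ ω := (1/σ)(s − s⁰/(1+u⁰) u) is a bijection from {S ∈ ℝ⁴ : η(U,S)=0, η(S,S)=σ²} onto the unit sphere S² ⊂ ℝ³, with inverse ω ↦ (σ ω·u, σ(ω + (ω·u)/(1+u⁰) u)). -/

import Mathlib

/-- Minkowski inner product on ℝ⁴ written as a pair (time component, space part). -/
def eta (X Y : ℝ × (Fin 3 → ℝ)) : ℝ := -(X.1 * Y.1) + ∑ i, X.2 i * Y.2 i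

/-- For a fixed unit timelike `U = (u⁰,u)` (`η(U,U) = -1`, `u⁰ > 0`), the map
`S ↦ ω = (1/σ)(s − s⁰/(1+u⁰) u)` is a bijection from
`{S : η(U,S)=0, η(S,S)=σ²}` onto the unit sphere `S² ⊂ ℝ³`, with inverse
`ω ↦ (σ ω·u, σ(ω + (ω·u)/(1+u⁰) u))`. -/
theorem spin_sphere_bijection (u : Fin 3 → ℝ) (u0 σ : ℝ) (hσ : 0 < σ)
    (hU : eta (u0, u) (u0, u) = -1) (hu0 : 0 < u0) :
    Set.BijOn
      (fun S : ℝ × (Fin 3 → ℝ) => fun i => (1 / σ) * (S.2 i - S.1 / (1 + u0) * u i))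
      {S | eta (u0, u) S = 0 ∧ eta S S = σ ^ 2}
      {ω : Fin 3 → ℝ | ∑ i, ω i ^ 2 = 1} ∧
    Set.InvOn
      (fun ω : Fin 3 → ℝ =>
        (σ * ∑ i, ω i * u i, fun i => σ * (ω i + ((∑ j, ω j * u j) / (1 + u0)) * u i)))
      (fun S : ℝ × (Fin 3 → ℝ) => fun i => (1 / σ) * (S.2 i - S.1 / (1 + u0) * u i))
      {S | eta (u0, u) S = 0 ∧ eta S S = σ ^ 2}
      {ω : Fin 3 → ℝ | ∑ i, ω i ^ 2 = 1} := by
  have hσ' : σ ≠ 0 := ne_of_gt hσ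
  have h1u : (1:ℝ) + u0 ≠ 0 := by positivity
  have hU' : -(u0*u0) + (u 0 * u 0 + u 1 * u 1 + u 2 * u 2) = -1 := by
    simpa [eta, Fin.sum_univ_three] using hU
  have hmf : Set.MapsTo
      (fun S : ℝ × (Fin 3 → ℝ) => fun i => (1 / σ) * (S.2 i - S.1 / (1 + u0) * u i))
      {S | eta (u0, u) S = 0 ∧ eta S S = σ ^ 2}
      {ω : Fin 3 → ℝ | ∑ i, ω i ^ 2 = 1} := by
    rintro ⟨s0, s⟩ ⟨hA, hB⟩
    simp only [eta, Fin.sum_univ_three, Set.mem_setOf_eq] at hA hB ⊢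
    field_simp
    linear_combination (1+u0)^2*hB - 2*(1+u0)*s0*hA + s0^2*hU'
  have hmg : Set.MapsTo
      (fun ω : Fin 3 → ℝ =>
        (σ * ∑ i, ω i * u i, fun i => σ * (ω i + ((∑ j, ω j * u j) / (1 + u0)) * u i)))
      {ω : Fin 3 → ℝ | ∑ i, ω i ^ 2 = 1}
      {S | eta (u0, u) S = 0 ∧ eta S S = σ ^ 2} := by
    intro ω hω
    simp only [eta, Fin.sum_univ_three, Set.mem_setOf_eq] at hω ⊢
    constructor
    · field_simp
      linear_combination σ*(ω 0*u 0+ω 1*u 1+ω 2*u 2)*hU'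
    · field_simp
      linear_combination (1+u0)^2*hω + (ω 0*u 0+ω 1*u 1+ω 2*u 2)^2*hU'
  have hinv : Set.InvOn
      (fun ω : Fin 3 → ℝ =>
        (σ * ∑ i, ω i * u i, fun i => σ * (ω i + ((∑ j, ω j * u j) / (1 + u0)) * u i)))
      (fun S : ℝ × (Fin 3 → ℝ) => fun i => (1 / σ) * (S.2 i - S.1 / (1 + u0) * u i))
      {S | eta (u0, u) S = 0 ∧ eta S S = σ ^ 2}
      {ω : Fin 3 → ℝ | ∑ i, ω i ^ 2 = 1} := by
    constructor
    · rintro ⟨s0, s⟩ ⟨hA, hB⟩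
      simp only [eta, Fin.sum_univ_three, Set.mem_setOf_eq] at hA hB
      refine Prod.ext ?_ ?_
      · simp only [Fin.sum_univ_three]
        field_simp
        linear_combination (1+u0)*hA - s0*hU'
      · funext i
        simp only [Fin.sum_univ_three]
        field_simp
        linear_combination (1+u0)*(u i)*hA - s0*(u i)*hU'
    · intro ω hω
      simp only [Set.mem_setOf_eq, Fin.sum_univ_three] at hω
      funext i
      simp only [Fin.sum_univ_three]
      field_simp
      ring
  exact ⟨hinv.bijOn hmf hmg, hinv⟩
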